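/- arXiv:1602.00314 — 2 statements merged into one kernel-verified Lean document; each statement's English description precedes it below -/
import Mathlib

section
/- Let f(X) = a_0 X^n + a_1 X^{n-1} + ... + a_n be a complex polynomial with a_0 ≠ 0. Then every complex root z of f satisfies |z| ≤ (2^{1/n} - 1)^{-1} · max_{1 ≤ k ≤ n} |a_k / (a_0 · binom(n,k))|^{1/k}. -/
theorem root_bound_marden (n : ℕ) (hn : 1 ≤ n) (a : ℕ → ℂ) (ha : a 0 ≠ 0)
    (z : ℂ) (hz : ∑ i ∈ Finset.range (n + 1), a i * z ^ (n - i) = 0) :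
    ‖z‖ ≤ ((2 : ℝ) ^ ((1 : ℝ) / n) - 1)⁻¹ *
      (Finset.Icc 1 n).sup' (Finset.nonempty_Icc.mpr hn)
        (fun k => ‖a k / (a 0 * (n.choose k : ℂ))‖ ^ ((1 : ℝ) / k)) := by
  set M := (Finset.Icc 1 n).sup' (Finset.nonempty_Icc.mpr hn)
      (fun k => ‖a k / (a 0 * (n.choose k : ℂ))‖ ^ ((1 : ℝ) / k)) with hMdef
  set c : ℝ := (2 : ℝ) ^ ((1 : ℝ) / n) - 1 with hcdef
  have hn0 : (n : ℝ) ≠ 0 := Nat.cast_ne_zero.mpr (by omega)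
  have hnpos : (0:ℝ) < n := Nat.cast_pos.mpr (by omega)
  have h2 : (1:ℝ) < (2:ℝ) ^ ((1:ℝ)/n) := by
    rw [Real.one_lt_rpow_iff_of_pos (by norm_num)]
    exact Or.inl ⟨by norm_num, one_div_pos.mpr hnpos⟩
  have hcval : c + 1 = (2:ℝ) ^ ((1:ℝ)/n) := by rw [hcdef]; ring
  have hM0 : 0 ≤ M := by
    have hle := Finset.le_sup'
      (fun k => ‖a k / (a 0 * (n.choose k : ℂ))‖ ^ ((1 : ℝ) / k))
      (Finset.mem_Icc.mpr ⟨le_refl 1, hn⟩)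
    rw [← hMdef] at hle
    exact le_trans (Real.rpow_nonneg (norm_nonneg _) _) hle
  have key : ∀ k ∈ Finset.Icc 1 n,
      ‖a k‖ ≤ ‖a 0‖ * (n.choose k) * M ^ k := by
    intro k hk
    rw [Finset.mem_Icc] at hk
    have hk0 : k ≠ 0 := by omega
    have hC : (0:ℝ) < (n.choose k : ℝ) := by exact_mod_cast Nat.choose_pos hk.2
    have hle := Finset.le_sup'
      (fun k => ‖a k / (a 0 * (n.choose k : ℂ))‖ ^ ((1 : ℝ) / k))
      (Finset.mem_Icc.mpr hk)
    rw [← hMdef] at hle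
    have hx : ‖a k / (a 0 * (n.choose k : ℂ))‖ ≤ M ^ k := by
      have := pow_le_pow_left₀ (Real.rpow_nonneg (norm_nonneg _) _) hle k
      rwa [one_div, Real.rpow_inv_natCast_pow (norm_nonneg _) hk0] at this
    rw [norm_div, norm_mul, Complex.norm_natCast] at hx
    have ha0 : 0 < ‖a 0‖ := norm_pos_iff.mpr ha
    calc ‖a k‖ = ‖a k‖ / (‖a 0‖ * n.choose k) *
          (‖a 0‖ * n.choose k) := by field_simp
      _ ≤ M ^ k * (‖a 0‖ * n.choose k) :=
          mul_le_mul_of_nonneg_right hx (by positivity)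
      _ = ‖a 0‖ * (n.choose k) * M ^ k := by ring
  by_contra h
  push_neg at h
  set A := ‖z‖ with hAdef
  clear_value M c A
  have hc : 0 < c := by linarith
  have hA : 0 < A :=
    lt_of_le_of_lt (mul_nonneg (inv_nonneg.mpr hc.le) hM0) h
  have hMA : M < c * A := by
    have h' : c⁻¹ * M < A := h
    calc M = c * (c⁻¹ * M) := by field_simp
      _ < c * A := by exact mul_lt_mul_of_pos_left h' hc
  have hsplit : Finset.range (n + 1) = insert 0 (Finset.Icc 1 n) := by
    ext x; simp only [Finset.mem_range, Finset.mem_insert, Finset.mem_Icc]; omega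
  have h0 : (0:ℕ) ∉ Finset.Icc 1 n := by simp
  rw [hsplit, Finset.sum_insert h0] at hz
  simp only [Nat.sub_zero] at hz
  have heq : a 0 * z ^ n = -∑ i ∈ Finset.Icc 1 n, a i * z ^ (n - i) :=
    eq_neg_of_add_eq_zero_left hz
  have hbound : ‖a 0‖ * A ^ n ≤
      ∑ i ∈ Finset.Icc 1 n, ‖a 0‖ * (n.choose i) * M ^ i * A ^ (n - i) := by
    rw [hAdef]
    calc ‖a 0‖ * ‖z‖ ^ n = ‖a 0 * z ^ n‖ := by
          rw [norm_mul, norm_pow]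
      _ = ‖∑ i ∈ Finset.Icc 1 n, a i * z ^ (n - i)‖ := by rw [heq, norm_neg]
      _ ≤ ∑ i ∈ Finset.Icc 1 n, ‖a i * z ^ (n - i)‖ := norm_sum_le _ _
      _ ≤ ∑ i ∈ Finset.Icc 1 n,
            ‖a 0‖ * (n.choose i) * M ^ i * ‖z‖ ^ (n - i) := by
          apply Finset.sum_le_sum
          intro i hi
          rw [norm_mul, norm_pow]
          exact mul_le_mul_of_nonneg_right (key i hi) (by positivity)
  have hbinom : ∑ i ∈ Finset.Icc 1 n, (M ^ i * A ^ (n - i) * (n.choose i : ℝ)) =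
      (M + A) ^ n - A ^ n := by
    have := add_pow M A n
    rw [hsplit, Finset.sum_insert h0] at this
    simp only [pow_zero, Nat.sub_zero, Nat.choose_zero_right, Nat.cast_one, one_mul,
      mul_one] at this
    linarith
  have hlt : (M + A) ^ n < 2 * A ^ n := by
    have h1 : M + A < ((2:ℝ) ^ ((1:ℝ)/n)) * A := by
      have : (c + 1) * A = ((2:ℝ) ^ ((1:ℝ)/n)) * A := by rw [hcval]
      nlinarith
    calc (M + A) ^ n < (((2:ℝ) ^ ((1:ℝ)/n)) * A) ^ n :=
          pow_lt_pow_left₀ h1 (by positivity) (by omega)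
      _ = 2 * A ^ n := by
          rw [mul_pow, ← Real.rpow_natCast ((2:ℝ) ^ ((1:ℝ)/n)) n,
            ← Real.rpow_mul (by norm_num), one_div, inv_mul_cancel₀ hn0, Real.rpow_one]
  have ha0 : 0 < ‖a 0‖ := norm_pos_iff.mpr ha
  have hfinal : ‖a 0‖ * A ^ n < ‖a 0‖ * A ^ n := by
    calc ‖a 0‖ * A ^ n
        ≤ ∑ i ∈ Finset.Icc 1 n, ‖a 0‖ * (n.choose i) * M ^ i * A ^ (n - i) :=
          hbound
      _ = ‖a 0‖ * ∑ i ∈ Finset.Icc 1 n,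
            (M ^ i * A ^ (n - i) * (n.choose i : ℝ)) := by
          rw [Finset.mul_sum]; apply Finset.sum_congr rfl; intro i _; ring
      _ = ‖a 0‖ * ((M + A) ^ n - A ^ n) := by rw [hbinom]
      _ < ‖a 0‖ * (2 * A ^ n - A ^ n) :=
          mul_lt_mul_of_pos_left (by linarith) ha0
      _ = ‖a 0‖ * A ^ n := by ring
  exact absurd hfinal (lt_irrefl _)
end

section
/- For n ≥ 5, every proper subgroup K of the alternating group A_n has index at least n; equivalently, max{ [A_n : K]^{-1} : K a proper subgroup of A_n } = 1/n. -/
open Equiv Equiv.Perm Subgroup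

def permCongrMulEquiv {α β : Type*} (e : α ≃ β) : Perm α ≃* Perm β :=
  { e.permCongr with
    map_mul' := fun x y => by
      ext b
      simp [Equiv.permCongr_apply, Equiv.Perm.mul_apply] }

lemma exists_not_mem_finset {β : Type*} [Fintype β] [DecidableEq β] (s : Finset β)
    (h : s.card < Fintype.card β) : ∃ z, z ∉ s := by
  by_contra hc
  push_neg at hc
  have h2 := Finset.card_le_card (fun z _ => hc z : (Finset.univ : Finset β) ⊆ s)
  simp only [Finset.card_univ] at h2
  omega

lemma perm_exists_apply_ne {β : Type*} {σ : Perm β} (h : σ ≠ 1) : ∃ y, σ y ≠ y := by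
  by_contra hc
  push_neg at hc
  exact h (Equiv.ext fun y => hc y)

lemma isSimpleGroup_alternating_of_card_five {α : Type*} [Fintype α] [DecidableEq α]
    (h5 : Fintype.card α = 5) : IsSimpleGroup (alternatingGroup α) := by
  have e : α ≃ Fin 5 := Fintype.equivFinOfCardEq h5
  have h3 : Nontrivial (alternatingGroup α) :=
    alternatingGroup.nontrivial_of_three_le_card (by rw [Nat.card_eq_fintype_card]; omega)
  have hsign : ∀ g : Perm (Fin 5), g ∈ alternatingGroup (Fin 5) →
      (permCongrMulEquiv e.symm) g ∈ alternatingGroup α := by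
    intro g hg
    rw [Equiv.Perm.mem_alternatingGroup] at hg ⊢
    show sign (e.symm.permCongr g) = 1
    rw [Equiv.Perm.sign_permCongr]
    exact hg
  let ψ : alternatingGroup (Fin 5) →* alternatingGroup α :=
    ((permCongrMulEquiv e.symm).toMonoidHom.comp
      (alternatingGroup (Fin 5)).subtype).codRestrict (alternatingGroup α)
      (fun g => hsign g g.2)
  have hsurj : Function.Surjective ψ := by
    intro h
    have hmem : (e.permCongr (h : Perm α)) ∈ alternatingGroup (Fin 5) := by
      rw [Equiv.Perm.mem_alternatingGroup, Equiv.Perm.sign_permCongr]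
      exact h.2
    refine ⟨⟨e.permCongr (h : Perm α), hmem⟩, ?_⟩
    ext x
    show e.symm.permCongr (e.permCongr (h : Perm α)) x = (h : Perm α) x
    simp [Equiv.permCongr_apply]
  exact IsSimpleGroup.isSimpleGroup_of_surjective ψ hsurj

lemma subgroupOf_alternating_normal {α : Type*} [Fintype α] [DecidableEq α]
    (N : Subgroup (Perm α))
    (hconj : ∀ g ∈ N, ∀ h : Perm α, sign h = 1 → h * g * h⁻¹ ∈ N) :
    (N.subgroupOf (alternatingGroup α)).Normal := by
  constructor
  intro n hn g
  rw [Subgroup.mem_subgroupOf] at hn ⊢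
  simpa using hconj _ hn (g : Perm α) (Equiv.Perm.mem_alternatingGroup.1 g.2)

lemma even_le_of_three_cycle_mem {α : Type*} [Fintype α] [DecidableEq α]
    (h5 : 5 ≤ Fintype.card α) (N : Subgroup (Perm α))
    (hsign : ∀ g ∈ N, sign g = 1)
    (hconj : ∀ g ∈ N, ∀ h : Perm α, sign h = 1 → h * g * h⁻¹ ∈ N)
    {f : Perm α} (hf : f.IsThreeCycle) (hfN : f ∈ N) :
    ∀ g : Perm α, sign g = 1 → g ∈ N := by
  set A := alternatingGroup α
  have hnormal : (N.subgroupOf A).Normal := subgroupOf_alternating_normal N hconj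
  have hmem : (⟨f, hf.mem_alternatingGroup⟩ : A) ∈ N.subgroupOf A := by
    rw [Subgroup.mem_subgroupOf]; exact hfN
  have htop : N.subgroupOf A = ⊤ := by
    rw [eq_top_iff, ← hf.alternating_normalClosure (by rwa [Nat.card_eq_fintype_card])]
    exact Subgroup.normalClosure_le_normal (Set.singleton_subset_iff.2 hmem)
  intro g hg
  have hgm : (⟨g, Equiv.Perm.mem_alternatingGroup.2 hg⟩ : A) ∈ N.subgroupOf A := by
    rw [htop]; trivial
  rwa [Subgroup.mem_subgroupOf] at hgm

lemma key_lemma : ∀ (k : ℕ) (α : Type) [Fintype α] [DecidableEq α],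
    Fintype.card α ≤ k → 5 ≤ Fintype.card α →
    ∀ N : Subgroup (Perm α),
    (∀ g ∈ N, sign g = 1) →
    (∀ g ∈ N, ∀ h : Perm α, sign h = 1 → h * g * h⁻¹ ∈ N) →
    (∃ g ∈ N, g ≠ 1) →
    ∀ g : Perm α, sign g = 1 → g ∈ N := by
  intro k
  induction k with
  | zero => intro α _ _ hk h5; omega
  | succ k IH =>
    intro α _ _ hk h5 N hsign hconj hnt
    obtain ⟨σ, hσN, hσ1⟩ := hnt
    by_cases hcard : Fintype.card α = 5
    · -- base case: card 5, use simplicity of A_5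
      haveI := isSimpleGroup_alternating_of_card_five hcard
      set A := alternatingGroup α
      haveI hnormal : (N.subgroupOf A).Normal := subgroupOf_alternating_normal N hconj
      rcases hnormal.eq_bot_or_eq_top with hbot | htop
      · exfalso
        have : (⟨σ, Equiv.Perm.mem_alternatingGroup.2 (hsign σ hσN)⟩ : A) ∈ N.subgroupOf A := by
          rw [Subgroup.mem_subgroupOf]; exact hσN
        rw [hbot, Subgroup.mem_bot] at this
        exact hσ1 (by simpa [Subtype.ext_iff] using this)
      · intro g hg
        have hgm : (⟨g, Equiv.Perm.mem_alternatingGroup.2 hg⟩ : A) ∈ N.subgroupOf A := by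
          rw [htop]; trivial
        rwa [Subgroup.mem_subgroupOf] at hgm
    · -- inductive case: card α ≥ 6
      have h6 : 6 ≤ Fintype.card α := by omega
      -- find a nontrivial element of N with a fixed point
      have hexists : ∃ ρ, ρ ∈ N ∧ ρ ≠ 1 ∧ ∃ x, ρ x = x := by
        by_cases hfix : ∃ x, σ x = x
        · exact ⟨σ, hσN, hσ1, hfix⟩
        · push_neg at hfix
          have hne : Nonempty α := Fintype.card_pos_iff.1 (by omega)
          obtain ⟨a⟩ := hne
          set b := σ a with hb
          have hab : a ≠ b := fun h => hfix a h.symm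
          have hcard3 : ({a, b, σ b} : Finset α).card ≤ 3 := by
            refine (Finset.card_insert_le _ _).trans (Nat.succ_le_succ ?_)
            refine (Finset.card_insert_le _ _).trans (Nat.succ_le_succ ?_)
            simp
          obtain ⟨d, hd⟩ := exists_not_mem_finset {a, b, σ b} (by omega)
          simp only [Finset.mem_insert, Finset.mem_singleton, not_or] at hd
          obtain ⟨hda', hdb', hdσb'⟩ := hd
          have hda : d ≠ a := hda'
          have hdb : d ≠ b := hdb'
          have hdσb : d ≠ σ b := hdσb'
          set τ : Perm α := swap a d * swap a b with hτdef
          have hτ3 : IsThreeCycle τ :=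
            isThreeCycle_swap_mul_swap_same (Ne.symm hda) hab hdb
          have hτa : τ a = b := by
            rw [hτdef, Equiv.Perm.mul_apply, Equiv.swap_apply_left,
              Equiv.swap_apply_of_ne_of_ne (Ne.symm hab) (Ne.symm hdb)]
          have hτb : τ b = d := by
            rw [hτdef, Equiv.Perm.mul_apply, Equiv.swap_apply_right, Equiv.swap_apply_left]
          have hτd : τ d = a := by
            rw [hτdef, Equiv.Perm.mul_apply, Equiv.swap_apply_of_ne_of_ne hda hdb,
              Equiv.swap_apply_right]
          set ρ : Perm α := σ * τ * σ⁻¹ * τ⁻¹ with hρdef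
          have hρN : ρ ∈ N := by
            have h1 : τ * σ⁻¹ * τ⁻¹ ∈ N := hconj σ⁻¹ (N.inv_mem hσN) τ hτ3.sign
            have h2 := N.mul_mem hσN h1
            have : σ * (τ * σ⁻¹ * τ⁻¹) = ρ := by rw [hρdef]; group
            rwa [this] at h2
          have hρd : ρ d = σ b := by
            have hτinvd : τ⁻¹ d = b := by rw [← hτb]; simp
            have hσinvb : σ⁻¹ b = a := by rw [hb]; simp
            simp only [hρdef, Equiv.Perm.mul_apply, hτinvd, hσinvb, hτa]
          refine ⟨ρ, hρN, fun h1 => hdσb ?_, ?_⟩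
          · rw [h1] at hρd; simpa using hρd
          · have hcard5 : ({a, b, d, σ b, σ d} : Finset α).card ≤ 5 := by
              refine (Finset.card_insert_le _ _).trans (Nat.succ_le_succ ?_)
              refine (Finset.card_insert_le _ _).trans (Nat.succ_le_succ ?_)
              refine (Finset.card_insert_le _ _).trans (Nat.succ_le_succ ?_)
              refine (Finset.card_insert_le _ _).trans (Nat.succ_le_succ ?_)
              simp
            obtain ⟨x, hx⟩ := exists_not_mem_finset {a, b, d, σ b, σ d} (by omega)
            simp only [Finset.mem_insert, Finset.mem_singleton, not_or] at hx
            obtain ⟨hxa', hxb', hxd', hxσb', hxσd'⟩ := hx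
            have hxa : x ≠ a := hxa'
            have hxb : x ≠ b := hxb'
            have hxd : x ≠ d := hxd'
            have hxσb : x ≠ σ b := hxσb'
            have hxσd : x ≠ σ d := hxσd'
            refine ⟨x, ?_⟩
            have hτx : τ x = x := by
              rw [hτdef, Equiv.Perm.mul_apply, Equiv.swap_apply_of_ne_of_ne hxa hxb,
                Equiv.swap_apply_of_ne_of_ne hxa hxd]
            have hτinvx : τ⁻¹ x = x := by rw [Equiv.Perm.inv_eq_iff_eq, hτx]
            have hσinvx : τ (σ⁻¹ x) = σ⁻¹ x := by
              have h1 : σ⁻¹ x ≠ a := fun h => hxb (by rw [hb, ← h]; simp)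
              have h2 : σ⁻¹ x ≠ b := fun h => hxσb (by rw [← h]; simp)
              have h3 : σ⁻¹ x ≠ d := fun h => hxσd (by rw [← h]; simp)
              rw [hτdef, Equiv.Perm.mul_apply, Equiv.swap_apply_of_ne_of_ne h1 h2,
                Equiv.swap_apply_of_ne_of_ne h1 h3]
            simp only [hρdef, Equiv.Perm.mul_apply, hτinvx, hσinvx]
            simp
      obtain ⟨ρ, hρN, hρ1, x, hρx⟩ := hexists
      -- pass to the subtype of elements ≠ x
      set p : α → Prop := fun y => y ≠ x with hp
      have hiff : ∀ y, p y ↔ p (ρ y) := by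
        intro y
        simp only [hp]
        constructor
        · intro hy h
          exact hy (ρ.injective (by rw [h, hρx]))
        · intro hy h
          exact hy (by rw [h, hρx])
      set ρ' : Perm (Subtype p) := ρ.subtypePerm (fun y => (hiff y).symm) with hρ'
      have hof : Equiv.Perm.ofSubtype ρ' = ρ :=
        Equiv.Perm.ofSubtype_subtypePerm (fun y => (hiff y).symm) (fun y hy => fun hyx => hy (by rw [hyx, hρx]))
      set N' : Subgroup (Perm (Subtype p)) :=
        N.comap (Equiv.Perm.ofSubtype : Perm (Subtype p) →* Perm α) with hN'
      have hcards : Fintype.card (Subtype p) = Fintype.card α - 1 := by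
        have : Fintype.card {y // ¬ y = x} = Fintype.card α - Fintype.card {y // y = x} :=
          Fintype.card_subtype_compl _
        rw [Fintype.card_subtype_eq] at this
        exact this
      have hall : ∀ g' : Perm (Subtype p), sign g' = 1 → g' ∈ N' := by
        refine IH (Subtype p) (by omega) (by omega) N' ?_ ?_ ?_
        · intro g hg
          have := hsign _ hg
          rwa [Equiv.Perm.sign_ofSubtype] at this
        · intro g hg h hh
          have : Equiv.Perm.ofSubtype (h * g * h⁻¹)
              = Equiv.Perm.ofSubtype h * Equiv.Perm.ofSubtype g * (Equiv.Perm.ofSubtype h)⁻¹ := by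
            rw [map_mul, map_mul, map_inv]
          rw [Subgroup.mem_comap, this]
          exact hconj _ hg _ (by rw [Equiv.Perm.sign_ofSubtype]; exact hh)
        · refine ⟨ρ', by rw [Subgroup.mem_comap, hof]; exact hρN, ?_⟩
          obtain ⟨y, hy⟩ := perm_exists_apply_ne hρ1
          have hyx : p y := fun hyx => hy (by rw [hyx, hρx])
          intro h1
          apply hy
          have := congrArg (fun f : Perm (Subtype p) => (f ⟨y, hyx⟩ : Subtype p).val) h1
          simpa [hρ', Equiv.Perm.subtypePerm_apply] using this
      -- find a 3-cycle in the subtype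
      have hc5 : 5 ≤ Fintype.card (Subtype p) := by omega
      have hne' : Nonempty (Subtype p) := Fintype.card_pos_iff.1 (by omega)
      obtain ⟨u⟩ := hne'
      obtain ⟨v, hv⟩ := exists_not_mem_finset {u} (by
        rw [Finset.card_singleton]; omega)
      have hcard2 : ({u, v} : Finset (Subtype p)).card ≤ 2 := by
        refine (Finset.card_insert_le _ _).trans (Nat.succ_le_succ ?_)
        simp
      obtain ⟨w, hw⟩ := exists_not_mem_finset {u, v} (by omega)
      simp only [Finset.mem_insert, Finset.mem_singleton, not_or] at hv hw
      set f' : Perm (Subtype p) := swap u v * swap u w with hf'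
      have hf'3 : IsThreeCycle f' :=
        isThreeCycle_swap_mul_swap_same (Ne.symm hv) (Ne.symm hw.1) (Ne.symm hw.2)
      have hf'N : f' ∈ N' := hall f' hf'3.sign
      have hfN : Equiv.Perm.ofSubtype f' ∈ N := hf'N
      have hf3 : (Equiv.Perm.ofSubtype f').IsThreeCycle :=
        show (Equiv.Perm.ofSubtype f').cycleType = {3} from
          Equiv.Perm.cycleType_ofSubtype.trans hf'3
      exact even_le_of_three_cycle_mem h5 N hsign hconj hf3 hfN


theorem isSimpleGroup_alternating {α : Type} [Fintype α] [DecidableEq α]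
    (h5 : 5 ≤ Fintype.card α) : IsSimpleGroup (alternatingGroup α) := by
  have hnt : Nontrivial (alternatingGroup α) :=
    alternatingGroup.nontrivial_of_three_le_card (by rw [Nat.card_eq_fintype_card]; omega)
  set A := alternatingGroup α
  refine ⟨fun H hH => ?_⟩
  by_cases hb : H = ⊥
  · exact Or.inl hb
  right
  obtain ⟨u, hu1⟩ := Subgroup.ne_bot_iff_exists_ne_one.1 hb
  set N : Subgroup (Perm α) := H.map A.subtype with hN
  have hsign : ∀ g ∈ N, sign g = 1 := by
    rintro g ⟨h, hh, rfl⟩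
    exact Equiv.Perm.mem_alternatingGroup.1 h.2
  have hconj : ∀ g ∈ N, ∀ h : Perm α, sign h = 1 → h * g * h⁻¹ ∈ N := by
    rintro g ⟨v, hv, rfl⟩ h hh
    exact ⟨(⟨h, Equiv.Perm.mem_alternatingGroup.2 hh⟩ : A) * v
        * (⟨h, Equiv.Perm.mem_alternatingGroup.2 hh⟩ : A)⁻¹,
      hH.conj_mem v hv _, rfl⟩
  have hnt' : ∃ g ∈ N, g ≠ 1 := by
    refine ⟨((u : A) : Perm α), ⟨(u : A), u.2, rfl⟩, fun h => hu1 ?_⟩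
    have : ((u : A) : Perm α) = ((1 : H) : Perm α) := h
    exact Subtype.ext (Subtype.ext this)
  have hall := key_lemma (Fintype.card α) α le_rfl h5 N hsign hconj hnt'
  ext g
  simp only [Subgroup.mem_top, iff_true]
  have : (g : Perm α) ∈ N := hall _ (Equiv.Perm.mem_alternatingGroup.1 g.2)
  obtain ⟨h, hh, hhg⟩ := this
  rwa [show h = g from Subtype.ext (by exact hhg)] at hh


set_option maxHeartbeats 2000000 in
theorem alternating_group_minimal_index (n : ℕ) (hn : 5 ≤ n) :
    (∀ K : Subgroup (alternatingGroup (Fin n)), K ≠ ⊤ → n ≤ K.index) ∧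
    (∃ K : Subgroup (alternatingGroup (Fin n)), K ≠ ⊤ ∧ K.index = n) := by
  have hcard : Fintype.card (Fin n) = n := Fintype.card_fin n
  haveI hsimple : IsSimpleGroup (alternatingGroup (Fin n)) :=
    isSimpleGroup_alternating (by omega)
  set A := alternatingGroup (Fin n) with hA
  constructor
  · intro K hK
    rcases (Subgroup.normalCore_normal K).eq_bot_or_eq_top with hbot | htop
    · have hinj : Function.Injective (MulAction.toPermHom A (A ⧸ K)) := by
        rw [← MonoidHom.ker_eq_bot_iff, ← Subgroup.normalCore_eq_ker, hbot]
      have hle := Nat.card_le_card_of_injective _ hinj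
      haveI : Fintype (A ⧸ K) := Fintype.ofFinite _
      haveI : DecidableEq (A ⧸ K) := Classical.decEq _
      have h1 : Nat.card (Perm (A ⧸ K)) = Nat.factorial K.index := by
        rw [Nat.card_eq_fintype_card, Fintype.card_perm, ← Nat.card_eq_fintype_card,
          ← Subgroup.index_eq_card]
      haveI : Nontrivial (Fin n) := ⟨⟨⟨0, by omega⟩, ⟨1, by omega⟩, by simp [Fin.ext_iff]⟩⟩
      have h2 : 2 * Nat.card A = n.factorial := by
        rw [Nat.card_eq_fintype_card]
        show 2 * Fintype.card (alternatingGroup (Fin n)) = n.factorial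
        rw [two_mul_card_alternatingGroup, Fintype.card_perm, hcard]
      by_contra hlt
      push_neg at hlt
      have h3 : Nat.factorial K.index ≤ (n-1).factorial := Nat.factorial_le (by omega)
      have h4 : n.factorial ≤ 2 * (n-1).factorial := by
        calc n.factorial = 2 * Nat.card A := h2.symm
        _ ≤ 2 * Nat.card (Perm (A ⧸ K)) := by omega
        _ = 2 * Nat.factorial K.index := by rw [h1]
        _ ≤ 2 * (n-1).factorial := by omega
      have h5 : n * (n-1).factorial = n.factorial := Nat.mul_factorial_pred (by omega)
      have h6 : n * (n-1).factorial ≤ 2 * (n-1).factorial := by omega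
      have h7 : n ≤ 2 := Nat.le_of_mul_le_mul_right h6 (Nat.factorial_pos _)
      omega
    · exact absurd (top_le_iff.1 (htop ▸ K.normalCore_le)) hK
  · -- the stabilizer of a point
    haveI : MulAction.IsPretransitive A (Fin n) := by
      constructor
      intro a b
      by_cases hab : a = b
      · exact ⟨1, by simp [hab]⟩
      · obtain ⟨c, hc⟩ := exists_not_mem_finset {a, b} (by
          have : ({a, b} : Finset (Fin n)).card ≤ 2 :=
            (Finset.card_insert_le _ _).trans (by simp)
          omega)
        obtain ⟨d, hd⟩ := exists_not_mem_finset {a, b, c} (by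
          have : ({a, b, c} : Finset (Fin n)).card ≤ 3 :=
            (Finset.card_insert_le _ _).trans (Nat.succ_le_succ
              ((Finset.card_insert_le _ _).trans (by simp)))
          omega)
        simp only [Finset.mem_insert, Finset.mem_singleton, not_or] at hc hd
        have hg : (swap c d * swap a b : Perm (Fin n)) ∈ A := by
          rw [hA, Equiv.Perm.mem_alternatingGroup, Equiv.Perm.sign_mul,
            Equiv.Perm.sign_swap (fun h => hd.2.2 h.symm), Equiv.Perm.sign_swap hab]
          decide
        refine ⟨⟨_, hg⟩, ?_⟩
        show (swap c d * swap a b : Perm (Fin n)) a = b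
        rw [Equiv.Perm.mul_apply, Equiv.swap_apply_left,
          Equiv.swap_apply_of_ne_of_ne (fun h => hc.2 h.symm) (fun h => hd.2.1 h.symm)]
    refine ⟨MulAction.stabilizer A (⟨0, by omega⟩ : Fin n), ?_, ?_⟩
    · intro htop
      have h01 : (⟨0, by omega⟩ : Fin n) ≠ ⟨1, by omega⟩ := by simp [Fin.ext_iff]
      have h12 : (⟨1, by omega⟩ : Fin n) ≠ ⟨2, by omega⟩ := by simp [Fin.ext_iff]
      have h02 : (⟨0, by omega⟩ : Fin n) ≠ ⟨2, by omega⟩ := by simp [Fin.ext_iff]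
      have hg0A : (swap (⟨1, by omega⟩ : Fin n) ⟨2, by omega⟩
          * swap (⟨0, by omega⟩ : Fin n) ⟨1, by omega⟩) ∈ A := by
        rw [hA, Equiv.Perm.mem_alternatingGroup, Equiv.Perm.sign_mul,
          Equiv.Perm.sign_swap h12, Equiv.Perm.sign_swap h01]
        decide
      have hmem : (⟨_, hg0A⟩ : A) ∈ MulAction.stabilizer A (⟨0, by omega⟩ : Fin n) := by
        rw [htop]; trivial
      rw [MulAction.mem_stabilizer_iff, Submonoid.mk_smul, Equiv.Perm.smul_def] at hmem
      have hcomp : (swap (⟨1, by omega⟩ : Fin n) ⟨2, by omega⟩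
          * swap (⟨0, by omega⟩ : Fin n) ⟨1, by omega⟩) (⟨0, by omega⟩ : Fin n)
          = (⟨2, by omega⟩ : Fin n) := by
        rw [Equiv.Perm.mul_apply, Equiv.swap_apply_left, Equiv.swap_apply_left]
      rw [hcomp] at hmem
      exact h02 hmem.symm
    · rw [MulAction.index_stabilizer_of_transitive, Nat.card_eq_fintype_card, hcard]
end
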